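/- (Iwasawa decomposition; the GL_n case of the first claim of Lemma 2.20, G = P̄TK.) For every n ≥ 1 and every g ∈ GL_n(ℚ_p), there exist an invertible lower triangular n×n matrix b over ℚ_p and a matrix k ∈ GL_n(ℤ_p) such that g = b·k. -/

import Mathlib

open Matrix Finset

private lemma norm_sum_le_one' {p : ℕ} [Fact p.Prime] {ι : Type*} (s : Finset ι)
    (f : ι → ℚ_[p]) (h : ∀ i ∈ s, ‖f i‖ ≤ 1) : ‖∑ i ∈ s, f i‖ ≤ 1 :=
  IsUltrametricDist.norm_sum_le_of_forall_le_of_nonneg zero_le_one h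

private lemma mul_entries_le_one {p : ℕ} [Fact p.Prime] {n : ℕ}
    (X Y : Matrix (Fin n) (Fin n) ℚ_[p]) (hX : ∀ i j, ‖X i j‖ ≤ 1)
    (hY : ∀ i j, ‖Y i j‖ ≤ 1) : ∀ i j, ‖(X * Y) i j‖ ≤ 1 := by
  intro i j
  rw [Matrix.mul_apply]
  refine norm_sum_le_one' _ _ fun l _ => ?_
  rw [norm_mul]
  exact mul_le_one₀ (hX i l) (norm_nonneg _) (hY l j)

private lemma det_expand_first {n : ℕ} {R : Type*} [CommRing R]
    (M : Matrix (Fin (n+1)) (Fin (n+1)) R) (h : ∀ j ≠ 0, M 0 j = 0) :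
    M.det = M 0 0 * (M.submatrix Fin.succ Fin.succ).det := by
  rw [Matrix.det_succ_row_zero, Finset.sum_eq_single 0]
  · simp
  · intro j _ hj; rw [h j hj]; ring
  · simp

private lemma iwasawa_aux (p : ℕ) [Fact p.Prime] : ∀ (n : ℕ)
    (g : Matrix (Fin n) (Fin n) ℚ_[p]), IsUnit g.det →
    ∃ b k : Matrix (Fin n) (Fin n) ℚ_[p],
      IsUnit b.det ∧ (∀ i j : Fin n, i < j → b i j = 0) ∧
      (∀ i j, ‖k i j‖ ≤ 1) ∧ ‖k.det‖ = 1 ∧ g = b * k := by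
  intro n
  induction n with
  | zero =>
    intro g _
    refine ⟨1, 1, by simp, fun i => i.elim0, fun i => i.elim0, by simp, ?_⟩
    apply Subsingleton.elim
  | succ n ih =>
    intro g hg
    have hdet : g.det ≠ 0 := hg.ne_zero
    obtain ⟨j0, -, hj0⟩ := Finset.exists_max_image Finset.univ (fun j => ‖g 0 j‖)
      ⟨0, Finset.mem_univ 0⟩
    set σ : Equiv.Perm (Fin (n+1)) := Equiv.swap 0 j0 with hσ
    set c : ℚ_[p] := g 0 j0 with hcdef
    have hc : c ≠ 0 := by
      intro h0
      apply hdet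
      apply Matrix.det_eq_zero_of_row_eq_zero 0
      intro j
      have := hj0 j (Finset.mem_univ j)
      rw [h0, norm_zero] at this
      exact norm_eq_zero.mp (le_antisymm this (norm_nonneg _))
    set M : Matrix (Fin (n+1)) (Fin (n+1)) ℚ_[p] := σ.toPEquiv.toMatrix with hMdef
    have hMapp : ∀ (A : Matrix (Fin (n+1)) (Fin (n+1)) ℚ_[p]) i j,
        (A * M) i j = A i (σ j) := by
      intro A i j
      rw [hMdef, PEquiv.mul_toMatrix_toPEquiv, Equiv.symm_swap, Matrix.submatrix_apply, id]
    have hMM : M * M = 1 := by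
      rw [hMdef, ← PEquiv.toMatrix_trans, ← Equiv.toPEquiv_trans, hσ, Equiv.swap_swap,
        Equiv.toPEquiv_refl, PEquiv.toMatrix_refl]
    have hMle : ∀ i j, ‖M i j‖ ≤ 1 := by
      intro i j
      rw [hMdef, PEquiv.toMatrix_apply]
      split <;> simp
    have hMdetnorm : ‖M.det‖ = 1 := by
      rw [hMdef, Matrix.det_permutation]
      rcases Int.units_eq_one_or (Equiv.Perm.sign σ) with h | h <;> rw [h] <;> simp
    have hMdet0 : M.det ≠ 0 := by
      intro h
      rw [h, norm_zero] at hMdetnorm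
      norm_num at hMdetnorm
    set N : Matrix (Fin (n+1)) (Fin (n+1)) ℚ_[p] :=
      Matrix.of (fun i j => if i = 0 ∧ j ≠ 0 then -(g 0 (σ j) / c) else 0) with hNdef
    have hNapp : ∀ i j, N i j = if i = 0 ∧ j ≠ 0 then -(g 0 (σ j) / c) else 0 :=
      fun i j => rfl
    have hNle : ∀ i j, ‖N i j‖ ≤ 1 := by
      intro i j
      rw [hNapp]
      split
      · rw [norm_neg, norm_div]
        rw [div_le_one (norm_pos_iff.mpr hc)]
        exact hj0 (σ j) (Finset.mem_univ _)
      · simp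
    have hNN : N * N = 0 := by
      ext i j
      rw [Matrix.mul_apply, Matrix.zero_apply]
      refine Finset.sum_eq_zero fun l _ => ?_
      rcases eq_or_ne l 0 with rfl | hl
      · rw [hNapp i 0]
        simp
      · rw [hNapp l j]
        simp [hl]
    have hFF : (1 + N) * (1 - N) = 1 := by
      have h : (1 + N) * (1 - N) = 1 - N * N := by noncomm_ring
      rw [h, hNN, sub_zero]
    have h1Nle : ∀ i j, ‖(1 - N) i j‖ ≤ 1 := by
      intro i j
      rcases eq_or_ne i j with rfl | hij
      · have : N i i = 0 := by rw [hNapp]; simp +contextual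
        simp [Matrix.sub_apply, this, Matrix.one_apply_eq]
      · rw [Matrix.sub_apply, Matrix.one_apply_ne hij, zero_sub, norm_neg]
        exact hNle i j
    have h1Ntri : ∀ (ε : ℚ_[p]), Matrix.BlockTriangular (1 + ε • N) id := by
      intro ε i j hij
      have hij' : i ≠ j := fun h => by subst h; exact lt_irrefl _ hij
      have hi0 : i ≠ 0 := by
        intro h
        subst h
        exact absurd hij (by simpa using (Fin.zero_le j).not_lt)
      rw [Matrix.add_apply, Matrix.one_apply_ne hij', Matrix.smul_apply, hNapp]
      simp [hi0]
    have h1Ndet : ∀ (ε : ℚ_[p]), (1 + ε • N).det = 1 := by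
      intro ε
      rw [Matrix.det_of_upperTriangular (h1Ntri ε)]
      refine Finset.prod_eq_one fun i _ => ?_
      have : N i i = 0 := by rw [hNapp]; simp +contextual
      simp [this, Matrix.one_apply_eq]
    have hFdet : (1 + N).det = 1 := by simpa using h1Ndet 1
    have h1mNdet : (1 - N).det = 1 := by
      have := h1Ndet (-1)
      rw [neg_one_smul] at this
      rw [sub_eq_add_neg]
      exact this
    set g'' : Matrix (Fin (n+1)) (Fin (n+1)) ℚ_[p] := g * M * (1 + N) with hg''def
    have hg''row : ∀ j, g'' 0 j = g 0 (σ j) + c * N 0 j := by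
      intro j
      rw [hg''def, mul_add, mul_one, Matrix.add_apply, hMapp, Matrix.mul_apply]
      congr 1
      rw [Finset.sum_eq_single 0]
      · rw [hMapp]
        simp [hσ, hcdef]
      · intro l _ hl
        have : N l j = 0 := by rw [hNapp]; simp [hl]
        rw [this, mul_zero]
      · simp
    have h00 : g'' 0 0 = c := by
      rw [hg''row 0, hNapp]
      simp [hσ, hcdef]
    have h0j : ∀ j, j ≠ 0 → g'' 0 j = 0 := by
      intro j hj
      rw [hg''row j, hNapp]
      rw [if_pos ⟨rfl, hj⟩, mul_neg, mul_div_cancel₀ _ hc, add_neg_cancel]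
    set A : Matrix (Fin n) (Fin n) ℚ_[p] := g''.submatrix Fin.succ Fin.succ with hAdef
    have hg''det : g''.det = g.det * M.det := by
      rw [hg''def, Matrix.det_mul, Matrix.det_mul, hFdet, mul_one]
    have hcA : g''.det = c * A.det := by
      rw [det_expand_first g'' (fun j hj => h0j j hj), h00, hAdef]
    have hAunit : IsUnit A.det := by
      rw [isUnit_iff_ne_zero]
      intro h0
      apply hdet
      have : g''.det = 0 := by rw [hcA, h0, mul_zero]
      rw [hg''det] at this
      exact (mul_eq_zero.mp this).resolve_right hMdet0
    obtain ⟨b', k', hb'u, hb't, hk'le, hk'det, hA⟩ := ih A hAunit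
    set b : Matrix (Fin (n+1)) (Fin (n+1)) ℚ_[p] :=
      Matrix.of (Fin.cases (fun j => Fin.cases c (fun _ => 0) j)
        (fun i j => Fin.cases (g'' i.succ 0) (fun j' => b' i j') j)) with hbdef
    set k : Matrix (Fin (n+1)) (Fin (n+1)) ℚ_[p] :=
      Matrix.of (Fin.cases (fun j => Fin.cases 1 (fun _ => 0) j)
        (fun i j => Fin.cases 0 (fun j' => k' i j') j)) with hkdef
    have hb00 : b 0 0 = c := rfl
    have hb0s : ∀ j : Fin n, b 0 j.succ = 0 := fun j => rfl
    have hbs0 : ∀ i : Fin n, b i.succ 0 = g'' i.succ 0 := fun i => rfl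
    have hbss : ∀ i j : Fin n, b i.succ j.succ = b' i j := fun i j => rfl
    have hk00 : k 0 0 = 1 := rfl
    have hk0s : ∀ j : Fin n, k 0 j.succ = 0 := fun j => rfl
    have hks0 : ∀ i : Fin n, k i.succ 0 = 0 := fun i => rfl
    have hkss : ∀ i j : Fin n, k i.succ j.succ = k' i j := fun i j => rfl
    -- b is lower triangular
    have hbtri : ∀ i j : Fin (n+1), i < j → b i j = 0 := by
      intro i j hij
      induction j using Fin.cases with
      | zero => exact absurd hij (by simp)
      | succ j' =>
        induction i using Fin.cases with
        | zero => exact hb0s j'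
        | succ i' =>
          rw [hbss]
          exact hb't i' j' (by simpa using hij)
    -- b row 0 vanishes off (0,0)
    have hbrow0 : ∀ j ≠ 0, b 0 j = 0 := by
      intro j hj
      induction j using Fin.cases with
      | zero => exact absurd rfl hj
      | succ j' => exact hb0s j'
    have hkrow0 : ∀ j ≠ 0, k 0 j = 0 := by
      intro j hj
      induction j using Fin.cases with
      | zero => exact absurd rfl hj
      | succ j' => exact hk0s j'
    have hbsub : b.submatrix Fin.succ Fin.succ = b' := by
      ext i j; exact hbss i j
    have hksub : k.submatrix Fin.succ Fin.succ = k' := by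
      ext i j; exact hkss i j
    have hbdet : b.det = c * b'.det := by
      rw [det_expand_first b hbrow0, hb00, hbsub]
    have hkdet : k.det = k'.det := by
      rw [det_expand_first k hkrow0, hk00, hksub, one_mul]
    have hbk : b * k = g'' := by
      ext i j
      rw [Matrix.mul_apply, Fin.sum_univ_succ]
      induction i using Fin.cases with
      | zero =>
        have hz : ∀ l : Fin n, b 0 l.succ * k l.succ j = 0 := fun l => by
          rw [hb0s, zero_mul]
        rw [Finset.sum_eq_zero fun l _ => hz l, add_zero, hb00]
        induction j using Fin.cases with
        | zero => rw [hk00, mul_one, h00]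
        | succ j' => rw [hk0s, mul_zero, h0j j'.succ (Fin.succ_ne_zero j')]
      | succ i' =>
        induction j using Fin.cases with
        | zero =>
          have hz : ∀ l : Fin n, b i'.succ l.succ * k l.succ 0 = 0 := fun l => by
            rw [hks0, mul_zero]
          rw [Finset.sum_eq_zero fun l _ => hz l, add_zero, hbs0, hk00, mul_one]
        | succ j' =>
          rw [hk0s, mul_zero, zero_add]
          have : ∀ l : Fin n, b i'.succ l.succ * k l.succ j'.succ = b' i' l * k' l j' :=
            fun l => by rw [hbss, hkss]
          rw [Finset.sum_congr rfl fun l _ => this l]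
          have := congrFun (congrFun hA i') j'
          rw [hAdef] at this
          simp only [Matrix.submatrix_apply] at this
          rw [← Matrix.mul_apply, ← this]
    have hgfact : g = b * (k * (1 - N) * M) := by
      have h1 : g'' * (1 - N) = g * M := by
        rw [hg''def, mul_assoc, hFF, mul_one]
      calc g = g * M * M := by rw [mul_assoc, hMM, mul_one]
        _ = g'' * (1 - N) * M := by rw [h1]
        _ = b * k * (1 - N) * M := by rw [hbk]
        _ = b * (k * (1 - N) * M) := by rw [mul_assoc, mul_assoc, mul_assoc]
    have hkle : ∀ i j, ‖k i j‖ ≤ 1 := by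
      intro i j
      induction i using Fin.cases with
      | zero =>
        induction j using Fin.cases with
        | zero => rw [hk00]; simp
        | succ j' => rw [hk0s]; simp
      | succ i' =>
        induction j using Fin.cases with
        | zero => rw [hks0]; simp
        | succ j' => rw [hkss]; exact hk'le i' j'
    refine ⟨b, k * (1 - N) * M, ?_, hbtri, ?_, ?_, hgfact⟩
    · rw [hbdet, isUnit_iff_ne_zero]
      exact mul_ne_zero hc (isUnit_iff_ne_zero.mp hb'u)
    · exact mul_entries_le_one _ _ (mul_entries_le_one _ _ hkle h1Nle) hMle
    · rw [Matrix.det_mul, Matrix.det_mul, norm_mul, norm_mul, hkdet, hk'det,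
        h1mNdet, hMdetnorm]
      simp

theorem statement0 (p : ℕ) [Fact p.Prime] (n : ℕ) (hn : 1 ≤ n)
    (g : Matrix (Fin n) (Fin n) ℚ_[p]) (hg : IsUnit g.det) :
    ∃ b k : Matrix (Fin n) (Fin n) ℚ_[p],
      IsUnit b.det ∧ (∀ i j : Fin n, i < j → b i j = 0) ∧
      (∀ i j, ‖k i j‖ ≤ 1) ∧ ‖k.det‖ = 1 ∧ g = b * k := by
  exact iwasawa_aux p n g hg
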